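/- Let μ ∈ ℝ^d, let Σ be a d×d real symmetric positive definite matrix, let U be a real d×n matrix, c ∈ ℝ^d, and x ∈ ℝⁿ with Ux ≠ 0. Define z(δ) = μᵀ(δ·Ux + c) / √(1 + (π/8)·(δ·Ux + c)ᵀ Σ (δ·Ux + c)) for δ ∈ ℝ. Then, as δ → ∞, |z(δ)| converges to the finite limit |μᵀ(Ux)| / √((π/8)·(Ux)ᵀΣ(Ux)). (Limit part of Theorem 2.4, last-layer approximation: on the terminal linear region of a ReLU feature map φ, φ(δx) = δ·Ux + c, so the softened logit |z(δx)| tends to a constant depending only on μ and Σ.) -/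

import Mathlib

open Matrix Filter

/-- Limit part of Theorem 2.4 (last-layer approximation): on the terminal
linear region `φ(δx) = δ·Ux + c`, the softened logit `|z(δ)|` converges, as
`δ → ∞`, to `|μᵀ(Ux)| / √((π/8)·(Ux)ᵀΣ(Ux))`. -/
theorem abs_softened_logit_tendsto_lastLayer {d n : ℕ}
    (μ c : Fin d → ℝ) (S : Matrix (Fin d) (Fin d) ℝ) (hS : S.PosDef)
    (U : Matrix (Fin d) (Fin n) ℝ) (x : Fin n → ℝ) (hUx : U *ᵥ x ≠ 0) :
    Tendsto
      (fun δ : ℝ =>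
        |(μ ⬝ᵥ (δ • (U *ᵥ x) + c)) /
          Real.sqrt (1 + Real.pi / 8 *
            ((δ • (U *ᵥ x) + c) ⬝ᵥ (S *ᵥ (δ • (U *ᵥ x) + c))))|)
      atTop
      (nhds (|μ ⬝ᵥ (U *ᵥ x)| /
        Real.sqrt (Real.pi / 8 * ((U *ᵥ x) ⬝ᵥ (S *ᵥ (U *ᵥ x)))))) := by
  set v := U *ᵥ x with hv
  set p := μ ⬝ᵥ v with hp
  set q := μ ⬝ᵥ c with hq
  set a := Real.pi / 8 * (v ⬝ᵥ S *ᵥ v) with hadef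
  set b := Real.pi / 8 * (v ⬝ᵥ S *ᵥ c + c ⬝ᵥ S *ᵥ v) with hbdef
  set e := 1 + Real.pi / 8 * (c ⬝ᵥ S *ᵥ c) with hedef
  have hvSv : 0 < v ⬝ᵥ S *ᵥ v := by
    have := hS.dotProduct_mulVec_pos hUx
    simpa using this
  have ha : 0 < a := by
    have := Real.pi_pos
    positivity
  have hsqrta : Real.sqrt a ≠ 0 := by
    positivity
  -- limit of the simplified function
  have hq0 : Tendsto (fun δ : ℝ => q / δ) atTop (nhds 0) :=
    tendsto_const_nhds.div_atTop tendsto_id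
  have hb0 : Tendsto (fun δ : ℝ => b / δ) atTop (nhds 0) :=
    tendsto_const_nhds.div_atTop tendsto_id
  have he0 : Tendsto (fun δ : ℝ => e / δ ^ 2) atTop (nhds 0) :=
    tendsto_const_nhds.div_atTop (tendsto_pow_atTop (by norm_num))
  have hnum : Tendsto (fun δ : ℝ => |p + q / δ|) atTop (nhds |p|) := by
    have := ((tendsto_const_nhds : Tendsto (fun _ : ℝ => p) atTop (nhds p)).add hq0).abs
    simpa using this
  have hden : Tendsto (fun δ : ℝ => Real.sqrt (a + b / δ + e / δ ^ 2)) atTop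
      (nhds (Real.sqrt a)) := by
    have h1 : Tendsto (fun δ : ℝ => a + b / δ + e / δ ^ 2) atTop (nhds a) := by
      have := ((tendsto_const_nhds : Tendsto (fun _ : ℝ => a) atTop (nhds a)).add hb0).add he0
      simpa using this
    exact (Real.continuous_sqrt.continuousAt.tendsto).comp h1
  have hlim : Tendsto (fun δ : ℝ => |p + q / δ| / Real.sqrt (a + b / δ + e / δ ^ 2))
      atTop (nhds (|p| / Real.sqrt a)) := hnum.div hden hsqrta
  refine Tendsto.congr' ?_ hlim
  filter_upwards [eventually_gt_atTop (0:ℝ)] with δ hδ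
  have hδ' : δ ≠ 0 := ne_of_gt hδ
  have hnumeq : μ ⬝ᵥ (δ • v + c) = δ * (p + q / δ) := by
    simp only [dotProduct_add, dotProduct_smul, smul_eq_mul, hp, hq]
    field_simp
  have hquad : 1 + Real.pi / 8 * ((δ • v + c) ⬝ᵥ (S *ᵥ (δ • v + c)))
      = δ ^ 2 * (a + b / δ + e / δ ^ 2) := by
    simp only [mulVec_add, mulVec_smul, dotProduct_add, add_dotProduct,
      smul_dotProduct, dotProduct_smul, smul_eq_mul, hadef, hbdef, hedef]
    field_simp
    ring
  rw [hnumeq, hquad, Real.sqrt_mul (sq_nonneg δ), Real.sqrt_sq hδ.le,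
    abs_div, abs_mul, abs_mul, abs_of_pos hδ, abs_of_nonneg (Real.sqrt_nonneg _),
    mul_div_mul_left _ _ hδ']
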